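/- For every integer n ≥ 2 and all elements p, q of R_n = ℚ[x, y₁, …, yₙ]/(x·y₁, …, x·yₙ) that lie in the ideal of R_n generated by x̄, ȳ₁, …, ȳₙ, the sequence [p, q] is not a (weakly) regular sequence on R_n; that is, if p is a non-zero-divisor of R_n then the image of q in R_n/(p) is a zero-divisor. (Hence the depth of the irrelevant ideal of R_n is at most 1, while the Krull dimension of R_n is n, so R_n is not Cohen–Macaulay.) -/

import Mathlib

open MvPolynomial

/-- The ideal `(x·y₁, …, x·yₙ)` in `ℚ[x, y₁, …, yₙ]`, where `x = X 0` and
`yᵢ = X i.succ` in `MvPolynomial (Fin (n+1)) ℚ`. -/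
noncomputable def relIdeal (n : ℕ) : Ideal (MvPolynomial (Fin (n + 1)) ℚ) :=
  Ideal.span (Set.range fun i : Fin n => X 0 * X i.succ)

/-- The ring `R_n = ℚ[x, y₁, …, yₙ]/(x·y₁, …, x·yₙ)`. -/
abbrev Rring (n : ℕ) := MvPolynomial (Fin (n + 1)) ℚ ⧸ relIdeal n

/-- The "irrelevant" ideal of `R_n`, generated by the images `x̄, ȳ₁, …, ȳₙ`
of all the variables. -/
noncomputable def irrelevantIdeal (n : ℕ) : Ideal (Rring n) :=
  Ideal.span (Set.range fun i : Fin (n + 1) => Ideal.Quotient.mk (relIdeal n) (X i))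

namespace NoRegAux

variable (n : ℕ)

/-- Substitution killing the `y` variables. -/
noncomputable def vx : Fin (n + 1) → MvPolynomial (Fin (n + 1)) ℚ :=
  Fin.cases (X 0) (fun _ => 0)

/-- Substitution killing the `x` variable. -/
noncomputable def vy : Fin (n + 1) → MvPolynomial (Fin (n + 1)) ℚ :=
  Fin.cases 0 (fun i => X i.succ)

@[simp] lemma vx_zero : vx n 0 = X 0 := rfl
@[simp] lemma vx_succ (i : Fin n) : vx n i.succ = 0 := by simp [vx]
@[simp] lemma vy_zero : vy n 0 = 0 := rfl
@[simp] lemma vy_succ (i : Fin n) : vy n i.succ = X i.succ := by simp [vy]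

lemma aeval_vx_rel : ∀ a ∈ relIdeal n, aeval (vx n) a = 0 := by
  intro a ha
  have : relIdeal n ≤ RingHom.ker (aeval (vx n)).toRingHom := by
    rw [relIdeal, Ideal.span_le]
    rintro s ⟨i, rfl⟩
    simp [RingHom.mem_ker]
  exact this ha

lemma aeval_vy_rel : ∀ a ∈ relIdeal n, aeval (vy n) a = 0 := by
  intro a ha
  have : relIdeal n ≤ RingHom.ker (aeval (vy n)).toRingHom := by
    rw [relIdeal, Ideal.span_le]
    rintro s ⟨i, rfl⟩
    simp [RingHom.mem_ker]
  exact this ha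

/-- The map `R_n → ℚ[x,y]` sending `x ↦ x`, `yᵢ ↦ 0`. -/
noncomputable def Ax : Rring n →+* MvPolynomial (Fin (n + 1)) ℚ :=
  Ideal.Quotient.lift (relIdeal n) (aeval (vx n)).toRingHom (aeval_vx_rel n)

/-- The map `R_n → ℚ[x,y]` sending `x ↦ 0`, `yᵢ ↦ yᵢ`. -/
noncomputable def Ay : Rring n →+* MvPolynomial (Fin (n + 1)) ℚ :=
  Ideal.Quotient.lift (relIdeal n) (aeval (vy n)).toRingHom (aeval_vy_rel n)

@[simp] lemma Ax_mk (f : MvPolynomial (Fin (n + 1)) ℚ) :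
    Ax n (Ideal.Quotient.mk (relIdeal n) f) = aeval (vx n) f := rfl

@[simp] lemma Ay_mk (f : MvPolynomial (Fin (n + 1)) ℚ) :
    Ay n (Ideal.Quotient.mk (relIdeal n) f) = aeval (vy n) f := rfl

/-- The "y-part" ideal in the polynomial ring. -/
noncomputable def Jy : Ideal (MvPolynomial (Fin (n + 1)) ℚ) :=
  Ideal.span (Set.range fun i : Fin n => X i.succ)

lemma sub_aeval_vx_mem (f : MvPolynomial (Fin (n + 1)) ℚ) :
    f - aeval (vx n) f ∈ Jy n := by
  induction f using MvPolynomial.induction_on with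
  | C a => simp
  | add f g hf hg =>
      have : f + g - aeval (vx n) (f + g) = (f - aeval (vx n) f) + (g - aeval (vx n) g) := by
        rw [map_add]; ring
      rw [this]; exact Ideal.add_mem _ hf hg
  | mul_X f j hf =>
      induction j using Fin.cases with
      | zero =>
          have : f * X 0 - aeval (vx n) (f * X 0) = (f - aeval (vx n) f) * X 0 := by
            rw [map_mul, aeval_X, vx_zero]; ring
          rw [this]; exact Ideal.mul_mem_right _ _ hf
      | succ i =>
          have : f * X i.succ - aeval (vx n) (f * X i.succ) = f * X i.succ := by
            rw [map_mul, aeval_X, vx_succ, mul_zero, sub_zero]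
          rw [this]
          exact Ideal.mul_mem_left _ _ (Ideal.subset_span ⟨i, rfl⟩)

lemma sub_aeval_vy_mem (f : MvPolynomial (Fin (n + 1)) ℚ) :
    f - aeval (vy n) f ∈ Ideal.span {(X 0 : MvPolynomial (Fin (n + 1)) ℚ)} := by
  induction f using MvPolynomial.induction_on with
  | C a => simp
  | add f g hf hg =>
      have : f + g - aeval (vy n) (f + g) = (f - aeval (vy n) f) + (g - aeval (vy n) g) := by
        rw [map_add]; ring
      rw [this]; exact Ideal.add_mem _ hf hg
  | mul_X f j hf =>
      induction j using Fin.cases with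
      | zero =>
          have : f * X 0 - aeval (vy n) (f * X 0) = f * X 0 := by
            rw [map_mul, aeval_X, vy_zero, mul_zero, sub_zero]
          rw [this]
          exact Ideal.mul_mem_left _ _ (Ideal.subset_span rfl)
      | succ i =>
          have : f * X i.succ - aeval (vy n) (f * X i.succ)
              = (f - aeval (vy n) f) * X i.succ := by
            rw [map_mul, aeval_X, vy_succ]; ring
          rw [this]; exact Ideal.mul_mem_right _ _ hf

lemma X0_mul_Jy_mem {z : MvPolynomial (Fin (n + 1)) ℚ} (hz : z ∈ Jy n) :
    X 0 * z ∈ relIdeal n := by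
  induction hz using Submodule.span_induction with
  | mem s hs =>
      obtain ⟨i, rfl⟩ := hs
      exact Ideal.subset_span ⟨i, rfl⟩
  | zero => simp
  | add a b _ _ ha hb =>
      have : X (0 : Fin (n + 1)) * (a + b) = X 0 * a + X 0 * b := by ring
      rw [this]; exact Ideal.add_mem _ ha hb
  | smul a z _ hz =>
      have : X (0 : Fin (n + 1)) * (a • z) = a * (X 0 * z) := by
        rw [smul_eq_mul]; ring
      rw [this]; exact Ideal.mul_mem_left _ _ hz

lemma Ax_mem_span {p : Rring n} (hp : p ∈ irrelevantIdeal n) :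
    Ax n p ∈ Ideal.span {(X 0 : MvPolynomial (Fin (n + 1)) ℚ)} := by
  induction hp using Submodule.span_induction with
  | mem s hs =>
      obtain ⟨i, rfl⟩ := hs
      induction i using Fin.cases with
      | zero => simpa using Ideal.subset_span (Set.mem_singleton _)
      | succ j => simp
  | zero => simp
  | add a b _ _ ha hb => rw [map_add]; exact Ideal.add_mem _ ha hb
  | smul a z _ hz => rw [smul_eq_mul, map_mul]; exact Ideal.mul_mem_left _ _ hz

lemma cc_aeval (u : Fin (n + 1) → MvPolynomial (Fin (n + 1)) ℚ)
    (hu : ∀ j, constantCoeff (u j) = 0) (f : MvPolynomial (Fin (n + 1)) ℚ) :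
    constantCoeff (aeval u f) = constantCoeff f := by
  induction f using MvPolynomial.induction_on with
  | C a => simp
  | add f g hf hg => rw [map_add, map_add, map_add, hf, hg]
  | mul_X f j hf => rw [map_mul, map_mul, aeval_X, map_mul, hu j, constantCoeff_X, mul_zero,
      mul_zero]

lemma cc_vx (j : Fin (n + 1)) : constantCoeff (vx n j) = 0 := by
  induction j using Fin.cases <;> simp

lemma cc_vy (j : Fin (n + 1)) : constantCoeff (vy n j) = 0 := by
  induction j using Fin.cases <;> simp

lemma aeval_vx_idem (f : MvPolynomial (Fin (n + 1)) ℚ) :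
    aeval (vx n) (aeval (vx n) f) = aeval (vx n) f := by
  rw [comp_aeval_apply]
  have : (fun i => aeval (vx n) (vx n i)) = vx n := by
    funext j
    induction j using Fin.cases <;> simp
  rw [this]

/-- The key commutation identity: for `p, q` in the irrelevant ideal,
`q · π(p) = p · π(q)` where `π` is "keep only the x-part". -/
lemma key_identity {p q : Rring n} (hp : p ∈ irrelevantIdeal n)
    (hq : q ∈ irrelevantIdeal n) :
    q * Ideal.Quotient.mk (relIdeal n) (Ax n p)
      = p * Ideal.Quotient.mk (relIdeal n) (Ax n q) := by
  obtain ⟨f, rfl⟩ := Ideal.Quotient.mk_surjective p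
  obtain ⟨g, rfl⟩ := Ideal.Quotient.mk_surjective q
  obtain ⟨d, hd⟩ := Ideal.mem_span_singleton'.mp (Ax_mem_span n hp)
  obtain ⟨e, he⟩ := Ideal.mem_span_singleton'.mp (Ax_mem_span n hq)
  rw [Ax_mk, Ax_mk] at *
  rw [← map_mul, ← map_mul, Ideal.Quotient.mk_eq_mk_iff_sub_mem]
  have : g * aeval (vx n) f - f * aeval (vx n) g
      = (g - aeval (vx n) g) * aeval (vx n) f - (f - aeval (vx n) f) * aeval (vx n) g := by
    ring
  rw [this, ← hd, ← he]
  have h1 : (g - e * X 0) * (d * X 0) = d * (X 0 * (g - e * X 0)) := by ring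
  have h2 : (f - d * X 0) * (e * X 0) = e * (X 0 * (f - d * X 0)) := by ring
  have hgJ : g - e * X 0 ∈ Jy n := by rw [he]; exact sub_aeval_vx_mem n g
  have hfJ : f - d * X 0 ∈ Jy n := by rw [hd]; exact sub_aeval_vx_mem n f
  rw [h1, h2]
  exact Ideal.sub_mem _
    (Ideal.mul_mem_left _ _ (X0_mul_Jy_mem n hgJ))
    (Ideal.mul_mem_left _ _ (X0_mul_Jy_mem n hfJ))

end NoRegAux

open NoRegAux in
/-- For every integer `n ≥ 2` and all `p, q ∈ R_n` lying in the ideal generated by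
`x̄, ȳ₁, …, ȳₙ`, the sequence `[p, q]` is not a (weakly) regular sequence on `R_n`:
it is impossible that `p` is a non-zero-divisor of `R_n` and the image of `q`
in `R_n/(p)` is a non-zero-divisor. -/
theorem no_regular_sequence_of_length_two (n : ℕ) (hn : 2 ≤ n) (p q : Rring n)
    (hp : p ∈ irrelevantIdeal n) (hq : q ∈ irrelevantIdeal n) :
    ¬ (p ∈ nonZeroDivisors (Rring n) ∧
        Ideal.Quotient.mk (Ideal.span {p}) q ∈
          nonZeroDivisors (Rring n ⧸ Ideal.span {p})) := by
  rintro ⟨hp1, hq1⟩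
  set mk0 := Ideal.Quotient.mk (relIdeal n) with hmk0
  set W : Rring n := mk0 (Ax n p) with hWdef
  -- `q * W ∈ (p)`, hence `W ∈ (p)` since `q` is a non-zero-divisor mod `p`.
  have keyW : q * W = p * mk0 (Ax n q) := key_identity n hp hq
  have hW0 : Ideal.Quotient.mk (Ideal.span {p}) W = 0 := by
    refine (mem_nonZeroDivisors_iff_right (M₀ := Rring n ⧸ Ideal.span {p})).mp hq1 _ ?_
    rw [← map_mul, mul_comm, keyW, Ideal.Quotient.eq_zero_iff_mem]
    exact Ideal.mem_span_singleton'.mpr ⟨mk0 (Ax n q), by ring⟩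
  rw [Ideal.Quotient.eq_zero_iff_mem] at hW0
  obtain ⟨r, hr⟩ := Ideal.mem_span_singleton'.mp hW0
  -- hr : r * p = W
  obtain ⟨f, hf⟩ := Ideal.Quotient.mk_surjective p
  -- Apply `Ax` to `W = r * p`.
  have hAxW : Ax n W = Ax n p := by
    rw [hWdef, ← hf, Ax_mk, Ax_mk, aeval_vx_idem]
  by_cases hAxp : Ax n p = 0
  · -- then `x̄ * p = 0`, contradicting that `p` is a non-zero-divisor
    have hfx : aeval (vx n) f = 0 := by rw [← Ax_mk, hf]; exact hAxp
    have hfJ : f ∈ Jy n := by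
      have := sub_aeval_vx_mem n f
      rwa [hfx, sub_zero] at this
    have hxp : mk0 (X 0) * p = 0 := by
      rw [← hf, ← map_mul, hmk0, Ideal.Quotient.eq_zero_iff_mem]
      exact X0_mul_Jy_mem n hfJ
    have : mk0 (X 0) = 0 := mem_nonZeroDivisors_iff_right.mp hp1 _ hxp
    have : Ax n (mk0 (X 0)) = 0 := by rw [this, map_zero]
    rw [Ax_mk] at this
    simp only [aeval_X, vx_zero] at this
    exact X_ne_zero _ this
  · -- `Ax r = 1`
    have hAxr : Ax n r = 1 := by
      have h := congrArg (Ax n) hr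
      rw [map_mul, hAxW] at h
      have : Ax n p * Ax n r = Ax n p * 1 := by rw [mul_one, mul_comm]; exact h
      exact mul_left_cancel₀ hAxp this
    -- `Ay W = 0`
    obtain ⟨d, hd⟩ := Ideal.mem_span_singleton'.mp (Ax_mem_span n hp)
    have hAyW : Ay n W = 0 := by
      rw [hWdef, ← hd, Ay_mk, map_mul, aeval_X, vy_zero, mul_zero]
    have hAy0 : Ay n r * Ay n p = 0 := by
      rw [← map_mul, hr, hAyW]
    by_cases hAyp : Ay n p = 0
    · -- then `ȳ₁ * p = 0`, contradicting that `p` is a non-zero-divisor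
      have hfy : aeval (vy n) f = 0 := by rw [← Ay_mk, hf]; exact hAyp
      have hfX : f ∈ Ideal.span {(X 0 : MvPolynomial (Fin (n + 1)) ℚ)} := by
        have := sub_aeval_vy_mem n f
        rwa [hfy, sub_zero] at this
      obtain ⟨s, hs⟩ := Ideal.mem_span_singleton'.mp hfX
      set j : Fin n := ⟨0, by omega⟩ with hj
      have hyp : mk0 (X j.succ) * p = 0 := by
        rw [← hf, ← map_mul, hmk0, Ideal.Quotient.eq_zero_iff_mem]
        have : X j.succ * f = s * (X 0 * X j.succ) := by rw [← hs]; ring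
        rw [this]
        exact Ideal.mul_mem_left _ _ (Ideal.subset_span ⟨j, rfl⟩)
      have : mk0 (X j.succ) = 0 := mem_nonZeroDivisors_iff_right.mp hp1 _ hyp
      have : Ay n (mk0 (X j.succ)) = 0 := by rw [this, map_zero]
      rw [Ay_mk] at this
      simp only [aeval_X, vy_succ] at this
      exact X_ne_zero _ this
    · -- then `Ay r = 0`, but `constantCoeff (Ax r) = constantCoeff (Ay r)`, contradiction
      have hAyr : Ay n r = 0 := by
        rcases mul_eq_zero.mp hAy0 with h | h
        · exact h
        · exact absurd h hAyp
      obtain ⟨g, hg⟩ := Ideal.Quotient.mk_surjective r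
      have e1 : constantCoeff (Ax n r) = constantCoeff g := by
        rw [← hg, Ax_mk]; exact cc_aeval n _ (cc_vx n) g
      have e2 : constantCoeff (Ay n r) = constantCoeff g := by
        rw [← hg, Ay_mk]; exact cc_aeval n _ (cc_vy n) g
      rw [hAxr, map_one] at e1
      rw [hAyr, map_zero] at e2
      exact one_ne_zero (e1.trans e2.symm)
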